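/- (Recovery theorem.) Let f : (ℝᵈ)* → ℝᵖ be computed by a minimal linear 2-RNN with n hidden units, and let L be such that the d^L × d^L p matricization of the Hankel tensor H^{(2L)}_f has rank n. Then for any rank factorization ⟨⟨H^{(2L)}_f⟩⟩_{L,L+1} = P S with P ∈ ℝ^{d^L×n} and S ∈ ℝ^{n×d^L p}, the linear 2-RNN M = (α, 𝒜, Ω) defined by α = (S†)ᵀ ⟨⟨H^{(L)}_f⟩⟩_{L+1}, Ωᵀ = P† ⟨⟨H^{(L)}_f⟩⟩_{L,1}, and 𝒜 = ⟨⟨H^{(2L+1)}_f⟩⟩_{L,1,L+1} ×₁ P† ×₃ (S†)ᵀ, is a minimal linear 2-RNN computing f. -/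

import Mathlib

open Matrix BigOperators

noncomputable section

def rnnStep {n d : ℕ} (A : Fin n → Fin d → Fin n → ℝ) (h : Fin n → ℝ) (x : Fin d → ℝ) :
    Fin n → ℝ := fun j => ∑ i, ∑ σ, A i σ j * h i * x σ

def hState {n d : ℕ} (A : Fin n → Fin d → Fin n → ℝ) (h₀ : Fin n → ℝ)
    (xs : List (Fin d → ℝ)) : Fin n → ℝ := xs.foldl (rnnStep A) h₀

def rnnOut {n d p : ℕ} (h₀ : Fin n → ℝ) (A : Fin n → Fin d → Fin n → ℝ)
    (Ω : Fin p → Fin n → ℝ) (xs : List (Fin d → ℝ)) : Fin p → ℝ :=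
  fun m => ∑ j, Ω m j * hState A h₀ xs j
def oneHot {d : ℕ} (σ : Fin d) : Fin d → ℝ := Pi.single σ 1

def IsMinimal {d p : ℕ} (n : ℕ) (f : List (Fin d → ℝ) → Fin p → ℝ) : Prop :=
  ∀ (n' : ℕ) (h₀' : Fin n' → ℝ) (A' : Fin n' → Fin d → Fin n' → ℝ) (Ω' : Fin p → Fin n' → ℝ),
    (∀ xs, rnnOut h₀' A' Ω' xs = f xs) → n ≤ n'

/-- `Md` is the Moore–Penrose pseudo-inverse of `M`. -/
def IsMoorePenrose {a b : Type*} [Fintype a] [Fintype b] [DecidableEq a] [DecidableEq b]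
    (M : Matrix a b ℝ) (Md : Matrix b a ℝ) : Prop :=
  M * Md * M = M ∧ Md * M * Md = Md ∧ (M * Md)ᵀ = M * Md ∧ (Md * M)ᵀ = Md * M

/-! ### Auxiliary lemmas -/

namespace RNNAux

variable {n d p : ℕ}

lemma hState_cons (A : Fin n → Fin d → Fin n → ℝ) (h : Fin n → ℝ) (x : Fin d → ℝ)
    (xs : List (Fin d → ℝ)) : hState A h (x :: xs) = hState A (rnnStep A h x) xs := rfl

lemma hState_append (A : Fin n → Fin d → Fin n → ℝ) (h : Fin n → ℝ)
    (xs ys : List (Fin d → ℝ)) : hState A h (xs ++ ys) = hState A (hState A h xs) ys :=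
  List.foldl_append

lemma rnnStep_single (A : Fin n → Fin d → Fin n → ℝ) (i : Fin n) (x : Fin d → ℝ)
    (j : Fin n) : rnnStep A (Pi.single i 1) x j = ∑ σ, A i σ j * x σ := by
  unfold rnnStep
  rw [Finset.sum_eq_single i]
  · simp [Pi.single_eq_same]
  · intro b _ hb
    simp [Pi.single_eq_of_ne hb]
  · simp

lemma rnnStep_linear (A : Fin n → Fin d → Fin n → ℝ) (h : Fin n → ℝ) (x : Fin d → ℝ)
    (j : Fin n) : rnnStep A h x j = ∑ i, h i * rnnStep A (Pi.single i 1) x j := by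
  simp only [rnnStep_single]
  unfold rnnStep
  simp only [Finset.mul_sum]
  exact Finset.sum_congr rfl fun i _ => Finset.sum_congr rfl fun σ _ => by ring

/-- Linearity of the state in the initial state. -/
lemma hState_linear (A : Fin n → Fin d → Fin n → ℝ) (xs : List (Fin d → ℝ))
    (h : Fin n → ℝ) (j : Fin n) :
    hState A h xs j = ∑ i, h i * hState A (Pi.single i 1) xs j := by
  induction xs generalizing h with
  | nil =>
      simp [hState, Pi.single_apply]
  | cons x xs ih =>
      rw [hState_cons, ih (rnnStep A h x)]
      calc ∑ a, rnnStep A h x a * hState A (Pi.single a 1) xs j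
          = ∑ a, (∑ i, h i * rnnStep A (Pi.single i 1) x a) * hState A (Pi.single a 1) xs j :=
            Finset.sum_congr rfl fun a _ => by rw [← rnnStep_linear]
        _ = ∑ i, h i * ∑ a, rnnStep A (Pi.single i 1) x a * hState A (Pi.single a 1) xs j := by
            simp only [Finset.sum_mul, Finset.mul_sum]
            rw [Finset.sum_comm]
            exact Finset.sum_congr rfl fun i _ => Finset.sum_congr rfl fun a _ => by ring
        _ = ∑ i, h i * hState A (Pi.single i 1) (x :: xs) j :=
            Finset.sum_congr rfl fun i _ => by
              rw [hState_cons, ih (rnnStep A (Pi.single i 1) x)]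

/-- The step on a one-hot input. -/
lemma rnnStep_oneHot (A : Fin n → Fin d → Fin n → ℝ) (h : Fin n → ℝ) (σ : Fin d)
    (j : Fin n) : rnnStep A h (oneHot σ) j = ∑ i, h i * A i σ j := by
  unfold rnnStep oneHot
  refine Finset.sum_congr rfl fun i _ => ?_
  rw [Finset.sum_eq_single σ]
  · rw [Pi.single_eq_same]; ring
  · intro τ _ hτ
    rw [Pi.single_eq_of_ne hτ]; ring
  · simp

/-- Cancellation for full-column-rank matrices. -/
lemma fullColRank_cancel {m k : Type*} [Fintype m] [Fintype k] [DecidableEq k] {N : ℕ}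
    (P : Matrix m (Fin N) ℝ) (hr : P.rank = N)
    (X Y : Matrix (Fin N) k ℝ) (hXY : P * X = P * Y) : X = Y := by
  have hinj : Function.Injective P.mulVecLin := by
    rw [← LinearMap.ker_eq_bot]
    have h1 := P.mulVecLin.finrank_range_add_finrank_ker
    rw [Module.finrank_fin_fun] at h1
    have h2 : Module.finrank ℝ (LinearMap.range P.mulVecLin) = N := hr
    rw [h2] at h1
    have h3 : Module.finrank ℝ (LinearMap.ker P.mulVecLin) = 0 := by omega
    exact Submodule.finrank_eq_zero.mp h3
  ext j b
  have h2 : P.mulVecLin (fun r => X r b) = P.mulVecLin (fun r => Y r b) := by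
    funext i
    have h3 := congrFun (congrFun hXY i) b
    simpa [Matrix.mulVecLin_apply, Matrix.mul_apply, Matrix.mulVec, dotProduct] using h3
  exact congrFun (hinj h2) j

/-- The transfer matrix of an input vector. -/
def Tx (A : Fin n → Fin d → Fin n → ℝ) (x : Fin d → ℝ) : Matrix (Fin n) (Fin n) ℝ :=
  Matrix.of fun i j => ∑ σ, A i σ j * x σ

lemma rnnStep_eq_vecMul (A : Fin n → Fin d → Fin n → ℝ) (h : Fin n → ℝ) (x : Fin d → ℝ) :
    rnnStep A h x = h ᵥ* Tx A x := by
  funext j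
  show rnnStep A h x j = ∑ i, h i * Tx A x i j
  unfold rnnStep Tx
  simp only [Matrix.of_apply, Finset.mul_sum]
  exact Finset.sum_congr rfl fun i _ => Finset.sum_congr rfl fun σ _ => by ring

lemma Tx_eq_sum (A : Fin n → Fin d → Fin n → ℝ) (x : Fin d → ℝ) :
    Tx A x = ∑ σ, x σ • (Matrix.of fun i j => A i σ j) := by
  ext i j
  simp [Tx, Matrix.sum_apply, mul_comm]

/-- Conjugation invariance: the recovered RNN computes the same function. -/
lemma rnnOut_conj (h₀ : Fin n → ℝ) (A : Fin n → Fin d → Fin n → ℝ) (Ω : Fin p → Fin n → ℝ)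
    (Q R : Matrix (Fin n) (Fin n) ℝ) (hQR : Q * R = 1)
    (α : Fin n → ℝ) (hα : α = h₀ ᵥ* Q)
    (Ωnew : Fin p → Fin n → ℝ) (hΩ : ∀ m, Ωnew m = R *ᵥ Ω m)
    (Anew : Fin n → Fin d → Fin n → ℝ)
    (hA : ∀ x : Fin d → ℝ, Tx Anew x = R * Tx A x * Q) :
    ∀ xs, rnnOut α Anew Ωnew xs = rnnOut h₀ A Ω xs := by
  have key : ∀ (xs : List (Fin d → ℝ)) (h : Fin n → ℝ),
      hState Anew (h ᵥ* Q) xs = (hState A h xs) ᵥ* Q := by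
    intro xs
    induction xs with
    | nil => intro h; rfl
    | cons x xs ih =>
        intro h
        rw [hState_cons, hState_cons]
        have hstep : rnnStep Anew (h ᵥ* Q) x = (rnnStep A h x) ᵥ* Q := by
          rw [rnnStep_eq_vecMul, rnnStep_eq_vecMul, hA, Matrix.vecMul_vecMul,
            Matrix.vecMul_vecMul, ← Matrix.mul_assoc, ← Matrix.mul_assoc, hQR,
            Matrix.one_mul]
        rw [hstep, ih]
  intro xs
  funext m
  have h2 : hState Anew α xs = hState A h₀ xs ᵥ* Q := by rw [hα]; exact key xs h₀
  have h1 : rnnOut α Anew Ωnew xs m = (R *ᵥ Ω m) ⬝ᵥ ((hState A h₀ xs) ᵥ* Q) := by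
    simp only [rnnOut, h2, hΩ, dotProduct]
  rw [h1, dotProduct_comm, Matrix.dotProduct_mulVec, Matrix.vecMul_vecMul, hQR,
    Matrix.vecMul_one]
  simp [rnnOut, dotProduct, mul_comm]

end RNNAux

open RNNAux

/-- Recovery theorem: a minimal linear 2-RNN computing `f` can be recovered from any rank
factorization `⟨⟨H^{(2L)}⟩⟩_{L,L+1} = P S` of the Hankel tensor via
`α = (S†)ᵀ vec(H^{(L)})`, `Ωᵀ = P† ⟨⟨H^{(L)}⟩⟩_{L,1}`,
`𝒜 = ⟨⟨H^{(2L+1)}⟩⟩_{L,1,L+1} ×₁ P† ×₃ (S†)ᵀ`. -/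
theorem linear2RNN_recovery {n d p L : ℕ}
    (h₀ : Fin n → ℝ) (A : Fin n → Fin d → Fin n → ℝ) (Ω : Fin p → Fin n → ℝ)
    (f : List (Fin d → ℝ) → Fin p → ℝ) (hf : ∀ xs, f xs = rnnOut h₀ A Ω xs)
    (hmin : IsMinimal n f)
    (H2L : Matrix (Fin L → Fin d) ((Fin L → Fin d) × Fin p) ℝ)
    (hH2L : ∀ u v m, H2L u (v, m)
      = f ((List.ofFn fun t => oneHot (u t)) ++ (List.ofFn fun t => oneHot (v t))) m)
    (hrank : H2L.rank = n)
    (P : Matrix (Fin L → Fin d) (Fin n) ℝ) (S : Matrix (Fin n) ((Fin L → Fin d) × Fin p) ℝ)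
    (hPS : H2L = P * S)
    (Pd : Matrix (Fin n) (Fin L → Fin d) ℝ) (hPd : IsMoorePenrose P Pd)
    (Sd : Matrix ((Fin L → Fin d) × Fin p) (Fin n) ℝ) (hSd : IsMoorePenrose S Sd)
    -- the recovered parameters
    (α : Fin n → ℝ)
    (hα : ∀ j, α j = ∑ c : (Fin L → Fin d) × Fin p,
      Sd c j * f (List.ofFn fun t => oneHot (c.1 t)) c.2)
    (Ωnew : Fin p → Fin n → ℝ)
    (hΩ : ∀ m a, Ωnew m a = ∑ u, Pd a u * f (List.ofFn fun t => oneHot (u t)) m)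
    (Anew : Fin n → Fin d → Fin n → ℝ)
    (hA : ∀ a σ b, Anew a σ b = ∑ u, ∑ c : (Fin L → Fin d) × Fin p,
      Pd a u * Sd c b *
        f ((List.ofFn fun t => oneHot (u t)) ++ [oneHot σ]
            ++ (List.ofFn fun t => oneHot (c.1 t))) c.2) :
    (∀ xs, rnnOut α Anew Ωnew xs = f xs) ∧ IsMinimal n f := by
  refine ⟨?_, hmin⟩
  -- forward and backward matrices
  set F : Matrix (Fin L → Fin d) (Fin n) ℝ :=
    Matrix.of fun u a => hState A h₀ (List.ofFn fun t => oneHot (u t)) a with hF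
  set B : Matrix (Fin n) ((Fin L → Fin d) × Fin p) ℝ :=
    Matrix.of fun a c =>
      ∑ j, Ω c.2 j * hState A (Pi.single a 1) (List.ofFn fun t => oneHot (c.1 t)) j with hB
  -- linearity of outputs in the initial state
  have hout : ∀ (h : Fin n → ℝ) (v : Fin L → Fin d) (m : Fin p),
      (∑ j, Ω m j * hState A h (List.ofFn fun t => oneHot (v t)) j)
        = ∑ a, h a * B a (v, m) := by
    intro h v m
    calc ∑ j, Ω m j * hState A h (List.ofFn fun t => oneHot (v t)) j
        = ∑ j, Ω m j * ∑ a, h a *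
            hState A (Pi.single a 1) (List.ofFn fun t => oneHot (v t)) j :=
          Finset.sum_congr rfl fun j _ => by
            rw [hState_linear A (List.ofFn fun t => oneHot (v t)) h j]
      _ = ∑ a, h a * B a (v, m) := by
          simp only [Finset.mul_sum, hB, Matrix.of_apply]
          rw [Finset.sum_comm]
          exact Finset.sum_congr rfl fun a _ => Finset.sum_congr rfl fun j _ => by ring
  -- Hankel factorization through the true RNN
  have hFB : H2L = F * B := by
    ext u ⟨v, m⟩
    rw [hH2L u v m, hf]
    simp only [rnnOut, Matrix.mul_apply]
    calc ∑ j, Ω m j * hState A h₀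
          ((List.ofFn fun t => oneHot (u t)) ++ (List.ofFn fun t => oneHot (v t))) j
        = ∑ j, Ω m j * hState A (hState A h₀ (List.ofFn fun t => oneHot (u t)))
            (List.ofFn fun t => oneHot (v t)) j := by
          simp only [hState_append]
      _ = ∑ a, hState A h₀ (List.ofFn fun t => oneHot (u t)) a * B a (v, m) := hout _ v m
      _ = ∑ a, F u a * B a (v, m) := rfl
  -- ranks
  have hrankP : P.rank = n := by
    refine le_antisymm (le_trans (Matrix.rank_le_card_width P) (by simp)) ?_
    calc n = H2L.rank := hrank.symm
      _ = (P * S).rank := by rw [hPS]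
      _ ≤ P.rank := Matrix.rank_mul_le_left P S
  have hrankS : S.rank = n := by
    refine le_antisymm (le_trans (Matrix.rank_le_card_height S) (by simp)) ?_
    calc n = H2L.rank := hrank.symm
      _ = (P * S).rank := by rw [hPS]
      _ ≤ S.rank := Matrix.rank_mul_le_right P S
  -- pseudo-inverse identities
  have hPdP : Pd * P = 1 := by
    refine fullColRank_cancel P hrankP _ _ ?_
    rw [← Matrix.mul_assoc, hPd.1, Matrix.mul_one]
  have hSSd : S * Sd = 1 := by
    have hrankSt : Sᵀ.rank = n := by rw [Matrix.rank_transpose]; exact hrankS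
    have h1 : Sᵀ * (Sdᵀ * Sᵀ) = Sᵀ * (1 : Matrix (Fin n) (Fin n) ℝ) := by
      rw [Matrix.mul_one, ← Matrix.transpose_mul, ← Matrix.transpose_mul,
        Matrix.mul_assoc, ← Matrix.mul_assoc, hSd.1]
    have h2 : Sdᵀ * Sᵀ = 1 := fullColRank_cancel Sᵀ hrankSt _ _ h1
    have h3 : (S * Sd)ᵀ = 1 := by rw [Matrix.transpose_mul]; exact h2
    calc S * Sd = ((S * Sd)ᵀ)ᵀ := by rw [Matrix.transpose_transpose]
      _ = (1 : Matrix (Fin n) (Fin n) ℝ)ᵀ := by rw [h3]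
      _ = 1 := Matrix.transpose_one
  -- the change of basis
  set Q : Matrix (Fin n) (Fin n) ℝ := B * Sd with hQ
  set R : Matrix (Fin n) (Fin n) ℝ := Pd * F with hR
  have hRQ : R * Q = 1 := by
    have h1 : R * Q = Pd * (F * B) * Sd := by
      rw [hR, hQ]
      simp only [Matrix.mul_assoc]
    rw [h1, ← hFB, hPS]
    calc Pd * (P * S) * Sd = (Pd * P) * (S * Sd) := by simp only [Matrix.mul_assoc]
      _ = 1 := by rw [hPdP, hSSd, Matrix.one_mul]
  have hQR : Q * R = 1 := mul_eq_one_comm.mpr hRQ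
  -- recovered parameters in conjugated form
  have hfw : ∀ c : (Fin L → Fin d) × Fin p,
      f (List.ofFn fun t => oneHot (c.1 t)) c.2 = ∑ a, h₀ a * B a c := by
    intro c
    rw [hf]
    exact hout h₀ c.1 c.2
  have hα' : α = h₀ ᵥ* Q := by
    funext j
    rw [hα j]
    simp only [hfw, Finset.mul_sum, Matrix.vecMul, dotProduct, hQ, Matrix.mul_apply]
    rw [Finset.sum_comm]
    exact Finset.sum_congr rfl fun a _ => Finset.sum_congr rfl fun c _ => by ring
  have hfw2 : ∀ (u : Fin L → Fin d) (m : Fin p),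
      f (List.ofFn fun t => oneHot (u t)) m = ∑ j, Ω m j * F u j := by
    intro u m
    rw [hf]
    rfl
  have hΩ' : ∀ m, Ωnew m = R *ᵥ Ω m := by
    intro m
    funext a
    rw [hΩ m a]
    simp only [hfw2, Finset.mul_sum, Matrix.mulVec, dotProduct, hR, Matrix.mul_apply,
      Finset.sum_mul]
    rw [Finset.sum_comm]
    exact Finset.sum_congr rfl fun j _ => Finset.sum_congr rfl fun u _ => by ring
  -- the middle Hankel identity
  have hmat : ∀ σ : Fin d, (Matrix.of fun a b => Anew a σ b)
      = R * (Matrix.of fun i j => A i σ j) * Q := by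
    intro σ
    have hb : (Matrix.of fun (u : Fin L → Fin d) (c : (Fin L → Fin d) × Fin p) =>
        f ((List.ofFn fun t => oneHot (u t)) ++ [oneHot σ]
            ++ (List.ofFn fun t => oneHot (c.1 t))) c.2)
        = F * (Matrix.of fun i j => A i σ j) * B := by
      ext u c
      show f _ c.2 = _
      rw [hf]
      show (∑ k, Ω c.2 k * hState A h₀
          (((List.ofFn fun t => oneHot (u t)) ++ [oneHot σ])
            ++ (List.ofFn fun t => oneHot (c.1 t))) k) = _
      calc (∑ k, Ω c.2 k * hState A h₀
            (((List.ofFn fun t => oneHot (u t)) ++ [oneHot σ])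
              ++ (List.ofFn fun t => oneHot (c.1 t))) k)
          = ∑ k, Ω c.2 k * hState A
              (rnnStep A (hState A h₀ (List.ofFn fun t => oneHot (u t))) (oneHot σ))
              (List.ofFn fun t => oneHot (c.1 t)) k := by
            simp only [hState_append]
            rfl
        _ = ∑ j, rnnStep A (hState A h₀ (List.ofFn fun t => oneHot (u t))) (oneHot σ) j
              * B j (c.1, c.2) := hout _ c.1 c.2
        _ = ∑ j, (F * (Matrix.of fun i j => A i σ j)) u j * B j c := by
            refine Finset.sum_congr rfl fun j _ => ?_
            rw [rnnStep_oneHot, Matrix.mul_apply]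
            rfl
        _ = (F * (Matrix.of fun i j => A i σ j) * B) u c := (Matrix.mul_apply).symm
    have ha : (Matrix.of fun a b => Anew a σ b)
        = Pd * ((F * (Matrix.of fun i j => A i σ j) * B) * Sd) := by
      ext a b
      show Anew a σ b = _
      rw [hA a σ b, ← hb]
      simp only [Matrix.mul_apply, Matrix.of_apply, Finset.mul_sum]
      exact Finset.sum_congr rfl fun u _ => Finset.sum_congr rfl fun c _ => by ring
    rw [ha, hR, hQ]
    simp only [Matrix.mul_assoc]
  have hA' : ∀ x : Fin d → ℝ, Tx Anew x = R * Tx A x * Q := by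
    intro x
    rw [Tx_eq_sum Anew x, Tx_eq_sum A x, Matrix.mul_sum, Matrix.sum_mul]
    refine Finset.sum_congr rfl fun σ _ => ?_
    rw [Matrix.mul_smul, Matrix.smul_mul, hmat σ]
  intro xs
  rw [hf xs]
  exact rnnOut_conj h₀ A Ω Q R hQR α hα' Ωnew hΩ' Anew hA' xs

end
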